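/- Let A be a positive semi-definite real symmetric n×n matrix and let I, J ⊆ [n] with |I| = |J|. If per(A[I,J]) ≠ 0, then per(A[I∪J, I∪J]) ≠ 0. -/

import Mathlib

/-- The permanent of a (possibly rectangular) matrix whose rows and columns are indexed by
finite types: the sum over all bijections `e : ι ≃ κ` of `∏ i, M i (e i)`.
For a square matrix this is the usual permanent `∑_{σ ∈ S_n} ∏_{i} M i (σ i)`. -/
noncomputable def Matrix.per {ι κ R : Type*} [Fintype ι] [Fintype κ] [DecidableEq ι]
    [DecidableEq κ] [CommSemiring R] (M : Matrix ι κ R) : R :=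
  ∑ e : ι ≃ κ, ∏ i, M i (e i)

/-- The permanental rank `ρ_per(A)` of an `n × n` matrix: the largest `k` such that some
`k × k` submatrix (rows chosen by an injection `f`, columns by an injection `g`) has
nonzero permanent. -/
noncomputable def permRank {n : ℕ} {R : Type*} [CommSemiring R]
    (A : Matrix (Fin n) (Fin n) R) : ℕ :=
  sSup {k | ∃ f g : Fin k → Fin n, Function.Injective f ∧ Function.Injective g ∧
    (A.submatrix f g).per ≠ 0}

/-- The principal submatrix `A[S, S]` of `A`, with rows and columns indexed by `S`. -/
noncomputable def principalSub {n : ℕ} {R : Type*} (A : Matrix (Fin n) (Fin n) R)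
    (S : Finset (Fin n)) : Matrix S S R :=
  A.submatrix Subtype.val Subtype.val

open MvPolynomial Finset Matrix
set_option linter.unusedSectionVars false

namespace PerAux

variable {n : ℕ} (B A : Matrix (Fin n) (Fin n) ℝ) {ι : Type*} [Fintype ι] [DecidableEq ι]

/-- the linear form `ℓ_k = ∑_t B t k • X t`. -/
noncomputable def ell (k : Fin n) : MvPolynomial (Fin n) ℝ :=
  ∑ t : Fin n, MvPolynomial.C (B t k) * MvPolynomial.X t

/-- the polynomial `P_S = ∏_{k ∈ S} ℓ_k`. -/
noncomputable def P (S : Finset (Fin n)) : MvPolynomial (Fin n) ℝ :=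
  ∏ k ∈ S, ell B k

/-- the exponent Finsupp of a tuple `f`. -/
noncomputable def D (f : ι → Fin n) : Fin n →₀ ℕ := ∑ i, Finsupp.single (f i) 1

/-- the weight of a tuple `h` indexed by `S`. -/
noncomputable def wt (S : Finset (Fin n)) (h : {x // x ∈ S} → Fin n) : ℝ :=
  ∏ i, B (h i) ↑i

/-- permanent of the rows of `B` selected (with multiplicity) by `f` against columns `S`. -/
noncomputable def F (S : Finset (Fin n)) (f : ι → Fin n) : ℝ :=
  ∑ e : ι ≃ {x // x ∈ S}, ∏ i, B (f i) ↑(e i)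

lemma D_comp {β : Type*} [Fintype β] [DecidableEq β] (e : ι ≃ β) (h : β → Fin n) :
    D (h ∘ e) = D h := by
  unfold D
  exact Equiv.sum_comp e (fun j => Finsupp.single (h j) 1)

lemma D_apply (f : ι → Fin n) (c : Fin n) :
    D f c = Fintype.card {i // f i = c} := by
  classical
  unfold D
  rw [Finsupp.finset_sum_apply, Fintype.card_subtype, Finset.card_eq_sum_ones,
    Finset.sum_filter]
  refine Finset.sum_congr rfl fun i _ => ?_
  rw [Finsupp.single_apply]

/-- if `D h = D f` then there is `e` with `h ∘ e = f`. -/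
lemma exists_equiv {β : Type*} [Fintype β] [DecidableEq β]
    (f : ι → Fin n) (h : β → Fin n) (hd : D h = D f) :
    ∃ e : ι ≃ β, h ∘ e = f := by
  classical
  have key : ∀ c, Fintype.card {i // f i = c} = Fintype.card {b // h b = c} := by
    intro c
    rw [← D_apply, ← D_apply, hd]
  refine ⟨Equiv.ofFiberEquiv (f := f) (g := h) fun c => Fintype.equivOfCardEq (key c), ?_⟩
  funext i
  exact Equiv.ofFiberEquiv_map _ i

/-- orbit–stabilizer style counting. -/
lemma card_solutions {β : Type*} [Fintype β] [DecidableEq β]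
    (f : ι → Fin n) (h : β → Fin n) (hd : D h = D f) :
    Fintype.card {e : ι ≃ β // h ∘ e = f}
      = Fintype.card {σ : ι ≃ ι // f ∘ σ = f} := by
  classical
  obtain ⟨e0, he0⟩ := exists_equiv f h hd
  refine Fintype.card_congr ?_
  refine
    { toFun := fun e => ⟨e.1.trans e0.symm, ?_⟩
      invFun := fun σ => ⟨σ.1.trans e0, ?_⟩
      left_inv := fun e => ?_
      right_inv := fun σ => ?_ }
  · funext i
    have := congrFun e.2 i
    simp only [Function.comp_apply] at this ⊢
    simp only [Equiv.trans_apply]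
    have h2 : h (e0 (e0.symm (e.1 i))) = f (e0.symm (e.1 i)) := congrFun he0 _
    rw [Equiv.apply_symm_apply] at h2
    rw [← h2, this]
  · funext i
    simp only [Function.comp_apply, Equiv.trans_apply]
    have h1 : h (e0 (σ.1 i)) = f (σ.1 i) := congrFun he0 (σ.1 i)
    have h2 : f (σ.1 i) = f i := congrFun σ.2 i
    rw [h1, h2]
  · apply Subtype.ext
    simp [Equiv.trans_assoc]
  · apply Subtype.ext
    simp [Equiv.trans_assoc]

lemma prod_X (s : Finset ι) (h : ι → Fin n) :
    (∏ i ∈ s, X (h i) : MvPolynomial (Fin n) ℝ)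
      = monomial (∑ i ∈ s, Finsupp.single (h i) 1) 1 := by
  classical
  induction s using Finset.cons_induction with
  | empty => simp [MvPolynomial.monomial_zero']
  | cons a s ha ih =>
      rw [Finset.prod_cons, Finset.sum_cons, ih, X, monomial_mul, one_mul]

lemma P_eq (S : Finset (Fin n)) :
    P B S = ∑ h : {x // x ∈ S} → Fin n, monomial (D h) (wt B S h) := by
  classical
  rw [P, ← Finset.prod_coe_sort]
  unfold ell
  rw [Finset.prod_univ_sum, Fintype.piFinset_univ]
  refine Finset.sum_congr rfl fun h _ => ?_
  rw [Finset.prod_mul_distrib, ← map_prod, prod_X univ h, C_mul_monomial, mul_one]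
  rfl

lemma coeff_P (S : Finset (Fin n)) (d : Fin n →₀ ℕ) :
    coeff d (P B S) = ∑ h : {x // x ∈ S} → Fin n, if D h = d then wt B S h else 0 := by
  classical
  rw [P_eq, coeff_sum]
  exact Finset.sum_congr rfl fun h _ => coeff_monomial d (D h) (wt B S h)

lemma F_eq (S : Finset (Fin n)) (f : ι → Fin n) :
    F B S f = (Fintype.card {σ : ι ≃ ι // f ∘ σ = f} : ℝ) * coeff (D f) (P B S) := by
  classical
  have step1 : ∀ e : ι ≃ {x // x ∈ S}, (∏ i, B (f i) ↑(e i)) = wt B S (f ∘ e.symm) := by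
    intro e
    unfold wt
    rw [← Equiv.prod_comp e (fun j => B ((f ∘ e.symm) j) ↑j)]
    refine Finset.prod_congr rfl fun i _ => ?_
    simp
  have step2 : F B S f = ∑ e : ι ≃ {x // x ∈ S}, wt B S (f ∘ e.symm) :=
    Finset.sum_congr rfl fun e _ => step1 e
  rw [step2]
  have step3 : ∀ e : ι ≃ {x // x ∈ S}, wt B S (f ∘ e.symm)
      = ∑ h : {x // x ∈ S} → Fin n, if f ∘ e.symm = h then wt B S h else 0 := by
    intro e
    rw [Finset.sum_ite_eq (Finset.univ) (f ∘ e.symm) (fun h => wt B S h)]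
    simp
  rw [Finset.sum_congr rfl fun e _ => step3 e, Finset.sum_comm]
  have step4 : ∀ h : {x // x ∈ S} → Fin n,
      (∑ e : ι ≃ {x // x ∈ S}, if f ∘ e.symm = h then wt B S h else 0)
        = (Fintype.card {e : ι ≃ {x // x ∈ S} // h ∘ e = f} : ℝ) * wt B S h := by
    intro h
    have hiff : ∀ e : ι ≃ {x // x ∈ S}, (f ∘ e.symm = h) ↔ (h ∘ e = f) := by
      intro e
      constructor
      · intro he; funext i
        have := congrFun he (e i); simpa using this.symm
      · intro he; funext s
        have := congrFun he (e.symm s); simpa using this.symm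
    rw [Finset.sum_congr rfl fun e _ => by rw [if_congr (hiff e) rfl rfl]]
    rw [← Finset.sum_filter, Finset.sum_const, nsmul_eq_mul, Fintype.card_subtype]
  rw [Finset.sum_congr rfl fun h _ => step4 h]
  have step5 : ∀ h : {x // x ∈ S} → Fin n,
      (Fintype.card {e : ι ≃ {x // x ∈ S} // h ∘ e = f} : ℝ) * wt B S h
        = (Fintype.card {σ : ι ≃ ι // f ∘ σ = f} : ℝ)
            * (if D h = D f then wt B S h else 0) := by
    intro h
    by_cases hd : D h = D f
    · rw [if_pos hd, card_solutions f h hd]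
    · rw [if_neg hd, mul_zero]
      haveI : IsEmpty {e : ι ≃ {x // x ∈ S} // h ∘ e = f} := by
        refine ⟨fun e => hd ?_⟩
        rw [← e.2]
        exact (D_comp e.1 h).symm ▸ rfl
      rw [Fintype.card_eq_zero]
      simp
  rw [Finset.sum_congr rfl fun h _ => step5 h, ← Finset.mul_sum, coeff_P]

lemma per_transpose {κ : Type*} [Fintype κ] [DecidableEq κ] (M : Matrix ι κ ℝ) :
    Mᵀ.per = M.per := by
  unfold Matrix.per
  refine Fintype.sum_bijective Equiv.symm ?_ _ _ ?_
  · exact ⟨fun a b hab => by simpa using congrArg Equiv.symm hab,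
      fun e => ⟨e.symm, e.symm_symm⟩⟩
  · intro e
    rw [← Equiv.prod_comp e (fun i => M i (e.symm i))]
    refine Finset.prod_congr rfl fun j _ => ?_
    simp [Matrix.transpose_apply]

lemma per_expand (S T : Finset (Fin n))
    (hA : ∀ i j : Fin n, A i j = ∑ t, B t i * B t j) :
    (A.submatrix (Subtype.val : {x // x ∈ S} → Fin n)
        (Subtype.val : {x // x ∈ T} → Fin n)).per
      = ∑ f : {x // x ∈ S} → Fin n, wt B S f * F B T f := by
  classical
  unfold Matrix.per F wt
  have expand : ∀ e : {x // x ∈ S} ≃ {x // x ∈ T},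
      (∏ i, A.submatrix Subtype.val Subtype.val i (e i))
        = ∑ f : {x // x ∈ S} → Fin n,
            (∏ i, B (f i) ↑i) * (∏ i, B (f i) ↑(e i)) := by
    intro e
    have : ∀ i : {x // x ∈ S}, A.submatrix Subtype.val Subtype.val i (e i)
        = ∑ t, B t ↑i * B t ↑(e i) := fun i => hA ↑i ↑(e i)
    rw [Finset.prod_congr rfl fun i _ => this i, Finset.prod_univ_sum,
      Fintype.piFinset_univ]
    refine Finset.sum_congr rfl fun f _ => ?_
    rw [Finset.prod_mul_distrib]
  rw [Finset.sum_congr rfl fun e _ => expand e, Finset.sum_comm]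
  refine Finset.sum_congr rfl fun f _ => ?_
  rw [← Finset.mul_sum]

lemma wt_comp_symm (U : Finset (Fin n)) (f : {x // x ∈ U} → Fin n)
    (e : {x // x ∈ U} ≃ {x // x ∈ U}) :
    (∏ i, B (f i) ↑(e i)) = wt B U (f ∘ e.symm) := by
  unfold wt
  rw [← Equiv.prod_comp e (fun j => B ((f ∘ e.symm) j) ↑j)]
  refine Finset.prod_congr rfl fun i _ => ?_
  simp

lemma F_sum_perm (U : Finset (Fin n)) (f : {x // x ∈ U} → Fin n) :
    F B U f = ∑ σ : Equiv.Perm {x // x ∈ U}, wt B U (f ∘ σ) := by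
  unfold F
  rw [Finset.sum_congr rfl fun e _ => wt_comp_symm B U f e]
  refine Fintype.sum_bijective Equiv.symm ?_ _ _ ?_
  · exact ⟨fun a b hab => by simpa using congrArg Equiv.symm hab,
      fun e => ⟨e.symm, e.symm_symm⟩⟩
  · intro e; rfl

lemma F_comp_perm (U : Finset (Fin n)) (f : {x // x ∈ U} → Fin n)
    (σ : Equiv.Perm {x // x ∈ U}) :
    F B U (f ∘ σ) = F B U f := by
  unfold F
  refine Fintype.sum_bijective (fun e => σ.symm.trans e) ?_ _ _ ?_
  · constructor
    · intro a b hab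
      have := congrArg (fun e => σ.trans e) hab
      simpa [← Equiv.trans_assoc] using this
    · intro e
      exact ⟨σ.trans e, by ext i; simp⟩
  · intro e
    rw [← Equiv.prod_comp σ (fun i => B (f i) ↑((σ.symm.trans e) i))]
    refine Finset.prod_congr rfl fun i _ => ?_
    simp

lemma per_diag (U : Finset (Fin n))
    (hA : ∀ i j : Fin n, A i j = ∑ t, B t i * B t j) :
    (Fintype.card (Equiv.Perm {x // x ∈ U}) : ℝ)
        * (A.submatrix (Subtype.val : {x // x ∈ U} → Fin n)
            (Subtype.val : {x // x ∈ U} → Fin n)).per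
      = ∑ f : {x // x ∈ U} → Fin n, F B U f * F B U f := by
  classical
  have key : ∀ f : {x // x ∈ U} → Fin n,
      F B U f * F B U f = ∑ σ : Equiv.Perm {x // x ∈ U}, wt B U (f ∘ σ) * F B U f := by
    intro f
    rw [F_sum_perm B U f, Finset.sum_mul]
  rw [Finset.sum_congr rfl fun f _ => key f, Finset.sum_comm]
  have inner : ∀ σ : Equiv.Perm {x // x ∈ U},
      (∑ f : {x // x ∈ U} → Fin n, wt B U (f ∘ σ) * F B U f)
        = ∑ f : {x // x ∈ U} → Fin n, wt B U f * F B U f := by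
    intro σ
    have step : ∀ f : {x // x ∈ U} → Fin n,
        wt B U (f ∘ σ) * F B U f = wt B U (f ∘ σ) * F B U (f ∘ σ) := by
      intro f; rw [F_comp_perm]
    rw [Finset.sum_congr rfl fun f _ => step f]
    refine Fintype.sum_bijective (fun f => f ∘ σ) ?_ _ _ ?_
    · constructor
      · intro a b hab
        funext i
        have := congrFun hab (σ.symm i)
        simpa using this
      · intro g
        exact ⟨g ∘ σ.symm, by funext i; simp⟩
    · intro f; rfl
  rw [Finset.sum_congr rfl fun σ _ => inner σ]
  rw [Finset.sum_const, nsmul_eq_mul, Fintype.card]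
  rw [per_expand B A U U hA]

lemma coeff_ell (t k : Fin n) :
    coeff (Finsupp.single t 1) (ell B k) = B t k := by
  classical
  unfold ell
  rw [MvPolynomial.coeff_sum]
  have : ∀ s : Fin n, coeff (Finsupp.single t 1) (C (B s k) * X s)
      = if s = t then B s k else 0 := by
    intro s
    rw [coeff_C_mul, MvPolynomial.coeff_X']
    by_cases hst : s = t
    · simp [hst]
    · have : Finsupp.single s 1 ≠ Finsupp.single t 1 := by
        intro hcon
        exact hst ((Finsupp.single_left_inj one_ne_zero).mp hcon)
      simp [hst, this]
  rw [Finset.sum_congr rfl fun s _ => this s]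
  simp

/-- from a nonzero permanent of a submatrix, the column polynomial is nonzero. -/
lemma P_ne_zero (S T : Finset (Fin n))
    (hA : ∀ i j : Fin n, A i j = ∑ t, B t i * B t j)
    (h : (A.submatrix (Subtype.val : {x // x ∈ S} → Fin n)
        (Subtype.val : {x // x ∈ T} → Fin n)).per ≠ 0) :
    P B T ≠ 0 := by
  intro hPT
  apply h
  rw [per_expand B A S T hA]
  refine Finset.sum_eq_zero fun f _ => ?_
  rw [F_eq, hPT, coeff_zero, mul_zero, mul_zero]

end PerAux

open PerAux

/-- Let `A` be a positive semi-definite real symmetric `n × n` matrix and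
`I, J ⊆ [n]` with `|I| = |J|`.  If `per(A[I, J]) ≠ 0` then `per(A[I ∪ J, I ∪ J]) ≠ 0`. -/
theorem per_union_ne_zero_of_per_ne_zero {n : ℕ} (A : Matrix (Fin n) (Fin n) ℝ)
    (hsym : A.IsSymm) (hpsd : A.PosSemidef) (I J : Finset (Fin n)) (hIJ : I.card = J.card)
    (h : (A.submatrix (Subtype.val : I → Fin n) (Subtype.val : J → Fin n)).per ≠ 0) :
    (principalSub A (I ∪ J)).per ≠ 0 := by
  classical
  obtain ⟨B, hBherm', hBB⟩ : ∃ B : Matrix (Fin n) (Fin n) ℝ, B.IsHermitian ∧ B * B = A :=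
    open scoped MatrixOrder in
    ⟨CFC.sqrt A, (CFC.sqrt_nonneg A).posSemidef.isHermitian,
      CFC.sqrt_mul_sqrt_self A hpsd.nonneg⟩
  have hBherm : B.IsHermitian := hBherm'
  have hBsym : ∀ i j : Fin n, B i j = B j i := by
    intro i j
    have := congrFun (congrFun hBherm j) i
    simpa [Matrix.conjTranspose_apply] using this
  have hA : ∀ i j : Fin n, A i j = ∑ t, B t i * B t j := by
    intro i j
    have hm : (B * B) i j = A i j := by rw [hBB]
    rw [← hm, Matrix.mul_apply]
    exact Finset.sum_congr rfl fun t _ => by rw [hBsym i t]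
  -- `P B J ≠ 0`
  have hPJ : P B J ≠ 0 := P_ne_zero B A I J hA h
  -- `P B I ≠ 0` via the transposed submatrix
  have hsub : A.submatrix (Subtype.val : J → Fin n) (Subtype.val : I → Fin n)
      = (A.submatrix (Subtype.val : I → Fin n) (Subtype.val : J → Fin n))ᵀ := by
    ext j i
    simp only [Matrix.transpose_apply, Matrix.submatrix_apply]
    have := congrFun (congrFun hsym (j : Fin n)) (i : Fin n)
    simpa [Matrix.transpose_apply] using this.symm
  have h' : (A.submatrix (Subtype.val : J → Fin n)
      (Subtype.val : I → Fin n)).per ≠ 0 := by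
    rw [hsub, per_transpose]
    exact h
  have hPI : P B I ≠ 0 := P_ne_zero B A J I hA h'
  -- each `ℓ_k` for `k ∈ J` is nonzero
  have hell : ∀ k ∈ J, ell B k ≠ 0 := by
    intro k hk hcon
    have hBcol : ∀ t, B t k = 0 := by
      intro t
      rw [← coeff_ell B t k, hcon, coeff_zero]
    have hAcol : ∀ i, A i k = 0 := by
      intro i
      rw [hA i k]
      exact Finset.sum_eq_zero fun t _ => by rw [hBcol t, mul_zero]
    apply h
    unfold Matrix.per
    refine Finset.sum_eq_zero fun e _ => ?_
    refine Finset.prod_eq_zero (Finset.mem_univ (e.symm ⟨k, hk⟩)) ?_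
    rw [Equiv.apply_symm_apply]
    simpa using hAcol ↑(e.symm ⟨k, hk⟩)
  -- `P B (I ∪ J) ≠ 0`
  have hPU : P B (I ∪ J) ≠ 0 := by
    rw [← Finset.union_sdiff_self_eq_union]
    unfold P
    rw [Finset.prod_union Finset.disjoint_sdiff]
    refine mul_ne_zero hPI ?_
    rw [Finset.prod_ne_zero_iff]
    exact fun k hk => hell k (Finset.mem_sdiff.mp hk).1
  -- get a nonzero coefficient of `P B (I ∪ J)` realized by some tuple `h0`
  obtain ⟨d, hd⟩ := MvPolynomial.ne_zero_iff.mp hPU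
  have hsum : (∑ h0 : {x // x ∈ I ∪ J} → Fin n,
      if D h0 = d then wt B (I ∪ J) h0 else 0) ≠ 0 := by
    rw [← coeff_P]; exact hd
  obtain ⟨h0, _, hh0⟩ := Finset.exists_ne_zero_of_sum_ne_zero hsum
  have hDh0 : D h0 = d := by
    by_contra hne
    rw [if_neg hne] at hh0
    exact hh0 rfl
  have hFh0 : F B (I ∪ J) h0 ≠ 0 := by
    rw [F_eq]
    refine mul_ne_zero ?_ ?_
    · have : 0 < Fintype.card {σ : {x // x ∈ I ∪ J} ≃ {x // x ∈ I ∪ J} // h0 ∘ σ = h0} :=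
        Fintype.card_pos_iff.mpr ⟨⟨Equiv.refl _, rfl⟩⟩
      exact_mod_cast this.ne'
    · rw [hDh0]; exact hd
  -- conclude positivity of the permanent of the principal submatrix
  have hdiag := per_diag B A (I ∪ J) hA
  have hpos : 0 < ∑ f : {x // x ∈ I ∪ J} → Fin n, F B (I ∪ J) f * F B (I ∪ J) f := by
    refine Finset.sum_pos' (fun f _ => mul_self_nonneg _) ⟨h0, Finset.mem_univ h0, ?_⟩
    exact mul_self_pos.mpr hFh0
  intro hper
  have : (principalSub A (I ∪ J)).per
      = (A.submatrix (Subtype.val : {x // x ∈ I ∪ J} → Fin n)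
          (Subtype.val : {x // x ∈ I ∪ J} → Fin n)).per := rfl
  rw [this] at hper
  rw [hper, mul_zero] at hdiag
  exact hpos.ne' hdiag.symm
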